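/- Fix λ ∈ ℝ and define Φ on the open positive orthant H = {x ∈ ℝ^K : x_i > 0 for all i} by Φ_i(x) = λ − φ_i(x)·exp(−Σ_{j∈V_i} φ_j(x)). Let A be the K×K matrix with A_{ij} = 1 if j ∈ V_i and A_{ij} = 0 otherwise, and let I be the K×K identity matrix. Then Φ is Fréchet differentiable at the all-ones vector 𝟙 = (1,…,1), and its derivative at 𝟙 is the linear map v ↦ −(e^{−1}/V³)·(A − V·I)²·v. Equivalently, the Jacobian matrix of Φ at 𝟙 has entries: −e^{−1}(V−1)/V² if j = i; e^{−1}|V_i ∪ V_j|/V³ if j ∈ V_i and j ≠ i; and −e^{−1}|V_i ∩ V_j|/V³ if j ∉ V_i. -/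

import Mathlib

open Finset

/-- The closed neighbourhood `V_i = {i} ∪ {j : (i,j) ∈ E}` of a vertex `i`. -/
def closedNbhd {K : ℕ} (G : SimpleGraph (Fin K)) [DecidableRel G.Adj] (i : Fin K) :
    Finset (Fin K) :=
  insert i (G.neighborFinset i)

/-- `φ_i(x) = x_i / ∑_{j ∈ V_i} x_j`. -/
noncomputable def phi {K : ℕ} (G : SimpleGraph (Fin K)) [DecidableRel G.Adj]
    (x : Fin K → ℝ) (i : Fin K) : ℝ :=
  x i / ∑ j ∈ closedNbhd G i, x j

/-- The matrix `A` with `A_{ij} = 1` if `j ∈ V_i` and `A_{ij} = 0` otherwise. -/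
def adjMat {K : ℕ} (G : SimpleGraph (Fin K)) [DecidableRel G.Adj] :
    Matrix (Fin K) (Fin K) ℝ :=
  Matrix.of fun i j => if j ∈ closedNbhd G i then 1 else 0

section Aux

variable {K V : ℕ} (G : SimpleGraph (Fin K)) [DecidableRel G.Adj]

lemma self_mem_closedNbhd (i : Fin K) : i ∈ closedNbhd G i := Finset.mem_insert_self _ _

lemma mem_closedNbhd_comm {i j : Fin K} : j ∈ closedNbhd G i ↔ i ∈ closedNbhd G j := by
  simp only [closedNbhd, Finset.mem_insert, SimpleGraph.mem_neighborFinset]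
  constructor
  · rintro (h | h)
    · exact Or.inl h.symm
    · exact Or.inr h.symm
  · rintro (h | h)
    · exact Or.inl h.symm
    · exact Or.inr h.symm

lemma sq_apply (i j : Fin K) :
    (((adjMat G - (V : ℝ) • 1) ^ 2 : Matrix (Fin K) (Fin K) ℝ)) i j =
      ((closedNbhd G i ∩ closedNbhd G j).card : ℝ)
        - (if j ∈ closedNbhd G i then 2 * (V : ℝ) else 0)
        + (if j = i then (V : ℝ) ^ 2 else 0) := by
  rw [sq, Matrix.mul_apply]
  simp only [Matrix.sub_apply, Matrix.smul_apply, Matrix.one_apply, adjMat, Matrix.of_apply,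
    smul_eq_mul, mul_ite, mul_one, mul_zero]
  have hsplit : ∀ k : Fin K,
      ((if k ∈ closedNbhd G i then (1:ℝ) else 0) - if i = k then (V:ℝ) else 0) *
        ((if j ∈ closedNbhd G k then (1:ℝ) else 0) - if k = j then (V:ℝ) else 0)
      = ((if k ∈ closedNbhd G i then (1:ℝ) else 0) * (if k ∈ closedNbhd G j then (1:ℝ) else 0)
          - (if k = j then (if k ∈ closedNbhd G i then (V:ℝ) else 0) else 0)
          - (if i = k then (if k ∈ closedNbhd G j then (V:ℝ) else 0) else 0))
          + (if i = k then (if k = j then (V:ℝ)^2 else 0) else 0) := by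
    intro k
    rw [if_congr (mem_closedNbhd_comm (G := G) (i := k) (j := j)) rfl rfl]
    split_ifs <;> ring
  rw [Finset.sum_congr rfl fun k _ => hsplit k]
  rw [Finset.sum_add_distrib, Finset.sum_sub_distrib, Finset.sum_sub_distrib]
  have hprod : (∑ k : Fin K,
      (if k ∈ closedNbhd G i then (1:ℝ) else 0) * (if k ∈ closedNbhd G j then (1:ℝ) else 0))
      = ((closedNbhd G i ∩ closedNbhd G j).card : ℝ) := by
    simp only [ite_mul, one_mul, zero_mul, ← ite_and, ← Finset.mem_inter]
    rw [Finset.sum_ite_mem, Finset.univ_inter, Finset.sum_const]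
    simp
  rw [hprod, Finset.sum_ite_eq', Finset.sum_ite_eq, Finset.sum_ite_eq]
  simp only [Finset.mem_univ, if_true]
  rw [if_congr (mem_closedNbhd_comm (G := G) (i := j) (j := i)) rfl rfl]
  by_cases hij : j = i <;> by_cases hji : j ∈ closedNbhd G i
  · subst hij; simp [hji]; ring
  · exact absurd (hij ▸ self_mem_closedNbhd G j) hji
  · have hij' : ¬ i = j := fun h => hij h.symm
    simp [hji, hij, hij']; ring
  · have hij' : ¬ i = j := fun h => hij h.symm
    simp [hji, hij, hij']

lemma mulVec_sq (i : Fin K) (v : Fin K → ℝ) :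
    ((((adjMat G - (V : ℝ) • 1) ^ 2 : Matrix (Fin K) (Fin K) ℝ)).mulVec v) i =
      (∑ j ∈ closedNbhd G i, ∑ k ∈ closedNbhd G j, v k)
        - 2 * (V : ℝ) * ∑ j ∈ closedNbhd G i, v j + (V : ℝ) ^ 2 * v i := by
  rw [Matrix.mulVec, dotProduct]
  simp only [sq_apply G]
  have hterm : ∀ j : Fin K,
      (((closedNbhd G i ∩ closedNbhd G j).card : ℝ)
        - (if j ∈ closedNbhd G i then 2 * (V : ℝ) else 0)
        + (if j = i then (V : ℝ) ^ 2 else 0)) * v j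
      = (∑ k ∈ closedNbhd G i, if j ∈ closedNbhd G k then v j else 0)
        - (if j ∈ closedNbhd G i then 2 * (V : ℝ) * v j else 0)
        + (if j = i then (V : ℝ) ^ 2 * v j else 0) := by
    intro j
    have hcard : ((closedNbhd G i ∩ closedNbhd G j).card : ℝ)
        = ∑ k ∈ closedNbhd G i, if j ∈ closedNbhd G k then (1:ℝ) else 0 := by
      rw [Finset.sum_congr rfl fun k _ =>
        if_congr (mem_closedNbhd_comm (G := G) (i := k) (j := j)) rfl rfl,
        Finset.sum_ite_mem]
      simp
    rw [hcard, add_mul, sub_mul, Finset.sum_mul]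
    simp only [ite_mul, one_mul, zero_mul]
  rw [Finset.sum_congr rfl fun j _ => hterm j]
  rw [Finset.sum_add_distrib, Finset.sum_sub_distrib]
  have h3 : (∑ j : Fin K, if j = i then (V:ℝ)^2 * v j else 0) = (V:ℝ)^2 * v i := by
    rw [Finset.sum_ite_eq' Finset.univ i fun j => (V:ℝ)^2 * v j]
    simp
  have h2 : (∑ j : Fin K, if j ∈ closedNbhd G i then 2*(V:ℝ)*v j else 0)
      = 2*(V:ℝ)* ∑ j ∈ closedNbhd G i, v j := by
    rw [Finset.sum_ite_mem, Finset.univ_inter, ← Finset.mul_sum]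
  have h1 : (∑ j : Fin K, ∑ k ∈ closedNbhd G i, if j ∈ closedNbhd G k then v j else 0)
      = ∑ j ∈ closedNbhd G i, ∑ k ∈ closedNbhd G j, v k := by
    rw [Finset.sum_comm]
    refine Finset.sum_congr rfl fun k _ => ?_
    rw [Finset.sum_ite_mem, Finset.univ_inter]
  rw [h1, h2, h3]

lemma V_ne_zero (hreg : ∀ i, (closedNbhd G i).card = V) (i : Fin K) : (V : ℝ) ≠ 0 := by
  have h : 0 < (closedNbhd G i).card := Finset.card_pos.mpr ⟨i, self_mem_closedNbhd G i⟩
  rw [hreg i] at h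
  exact_mod_cast h.ne'

lemma entry_eq (hreg : ∀ i, (closedNbhd G i).card = V) (i j : Fin K) :
    (((-(Real.exp (-1) / (V : ℝ) ^ 3)) • ((adjMat G - (V : ℝ) • 1) ^ 2) :
        Matrix (Fin K) (Fin K) ℝ)) i j =
      if j = i then -(Real.exp (-1) * ((V : ℝ) - 1) / (V : ℝ) ^ 2)
      else if j ∈ closedNbhd G i then
        Real.exp (-1) * ((closedNbhd G i ∪ closedNbhd G j).card : ℝ) / (V : ℝ) ^ 3
      else -(Real.exp (-1) * ((closedNbhd G i ∩ closedNbhd G j).card : ℝ) / (V : ℝ) ^ 3) := by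
  have hV : (V : ℝ) ≠ 0 := V_ne_zero G hreg i
  rw [Matrix.smul_apply, sq_apply G, smul_eq_mul]
  by_cases hij : j = i
  · subst hij
    rw [if_pos rfl, if_pos rfl, if_pos (self_mem_closedNbhd G j), Finset.inter_self, hreg j]
    field_simp
    ring
  · rw [if_neg hij, if_neg hij]
    by_cases hmem : j ∈ closedNbhd G i
    · rw [if_pos hmem, if_pos hmem]
      have hcup : ((closedNbhd G i ∪ closedNbhd G j).card : ℝ)
          = 2 * (V : ℝ) - ((closedNbhd G i ∩ closedNbhd G j).card : ℝ) := by
        have h := Finset.card_union_add_card_inter (closedNbhd G i) (closedNbhd G j)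
        rw [hreg i, hreg j] at h
        have h2 : ((closedNbhd G i ∪ closedNbhd G j).card : ℝ)
            + ((closedNbhd G i ∩ closedNbhd G j).card : ℝ) = (V : ℝ) + (V : ℝ) := by
          exact_mod_cast congrArg (Nat.cast : ℕ → ℝ) h
        linarith
      rw [hcup]
      field_simp
      ring
    · rw [if_neg hmem, if_neg hmem]
      ring

lemma phi_ones (hreg : ∀ i, (closedNbhd G i).card = V) (j : Fin K) :
    phi G (fun _ => 1) j = (V : ℝ)⁻¹ := by
  simp [phi, hreg j]

lemma hasFDerivAt_phi (hreg : ∀ i, (closedNbhd G i).card = V) (j : Fin K) :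
    HasFDerivAt (fun x : Fin K → ℝ => phi G x j)
      (((V : ℝ)⁻¹ • ContinuousLinearMap.proj j
        - ((V : ℝ) ^ 2)⁻¹ • ∑ k ∈ closedNbhd G j, ContinuousLinearMap.proj k :
          (Fin K → ℝ) →L[ℝ] ℝ))
      (fun _ => 1) := by
  have hV : (V : ℝ) ≠ 0 := V_ne_zero G hreg j
  have hS : HasFDerivAt (fun x : Fin K → ℝ => ∑ k ∈ closedNbhd G j, x k)
      ((∑ k ∈ closedNbhd G j, ContinuousLinearMap.proj k : (Fin K → ℝ) →L[ℝ] ℝ))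
      (fun _ => 1) :=
    HasFDerivAt.fun_sum fun k _ => hasFDerivAt_apply (𝕜 := ℝ) k _
  have hSval : (∑ k ∈ closedNbhd G j, (fun _ : Fin K => (1:ℝ)) k) = (V : ℝ) := by
    simp [hreg j]
  have hSne : (∑ k ∈ closedNbhd G j, (fun _ : Fin K => (1:ℝ)) k) ≠ 0 := by
    rw [hSval]; exact hV
  have hinv := (hasDerivAt_inv hSne).comp_hasFDerivAt (fun _ => (1:ℝ)) hS
  have hx : HasFDerivAt (fun x : Fin K → ℝ => x j)
      ((ContinuousLinearMap.proj j : (Fin K → ℝ) →L[ℝ] ℝ)) (fun _ => 1) :=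
    hasFDerivAt_apply (𝕜 := ℝ) j _
  have hmul := hx.mul hinv
  refine (hmul.congr_fderiv ?_).congr_of_eventuallyEq
    (Filter.Eventually.of_forall fun x => ?_)
  · ext v
    simp only [ContinuousLinearMap.add_apply, ContinuousLinearMap.smul_apply,
      ContinuousLinearMap.sub_apply, ContinuousLinearMap.proj_apply, smul_eq_mul,
      Function.comp_apply, hSval, ContinuousLinearMap.coe_sum', Finset.sum_apply]
    ring
  · simp [phi, div_eq_mul_inv, Function.comp]

end Aux

/-- The map `Φ_i(x) = λ − φ_i(x) exp(−∑_{j∈V_i} φ_j(x))` is Fréchet differentiable at the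
all-ones vector `𝟙` with derivative `v ↦ −(e⁻¹/V³)(A − V·I)² v`; equivalently the Jacobian
at `𝟙` has entries `−e⁻¹(V−1)/V²` on the diagonal, `e⁻¹|V_i ∪ V_j|/V³` for `j ∈ V_i`,
`j ≠ i`, and `−e⁻¹|V_i ∩ V_j|/V³` for `j ∉ V_i`. -/
theorem stmt13 {K V : ℕ} (G : SimpleGraph (Fin K)) [DecidableRel G.Adj]
    (hreg : ∀ i, (closedNbhd G i).card = V) (lam : ℝ) :
    HasFDerivAt
      (fun x : Fin K → ℝ => fun i =>
        lam - phi G x i * Real.exp (-∑ j ∈ closedNbhd G i, phi G x j))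
      (LinearMap.toContinuousLinearMap
        ((-(Real.exp (-1) / (V : ℝ) ^ 3)) • Matrix.toLin' ((adjMat G - (V : ℝ) • 1) ^ 2)))
      (fun _ => 1) ∧
    ∀ i j : Fin K,
      (((-(Real.exp (-1) / (V : ℝ) ^ 3)) • ((adjMat G - (V : ℝ) • 1) ^ 2) :
          Matrix (Fin K) (Fin K) ℝ)) i j =
        if j = i then -(Real.exp (-1) * ((V : ℝ) - 1) / (V : ℝ) ^ 2)
        else if j ∈ closedNbhd G i then
          Real.exp (-1) * ((closedNbhd G i ∪ closedNbhd G j).card : ℝ) / (V : ℝ) ^ 3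
        else -(Real.exp (-1) * ((closedNbhd G i ∩ closedNbhd G j).card : ℝ) / (V : ℝ) ^ 3) := by
  refine ⟨?_, fun i j => entry_eq G hreg i j⟩
  rw [hasFDerivAt_pi']
  intro i
  have hV : (V : ℝ) ≠ 0 := V_ne_zero G hreg i
  have hTval : (∑ j ∈ closedNbhd G i, phi G (fun _ => 1) j) = 1 := by
    rw [Finset.sum_congr rfl fun j _ => phi_ones G hreg j, Finset.sum_const, hreg i,
      nsmul_eq_mul]
    exact mul_inv_cancel₀ hV
  have hT := HasFDerivAt.fun_sum fun j (_ : j ∈ closedNbhd G i) => hasFDerivAt_phi G hreg j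
  have hexp := hT.neg.exp
  have hmul := (hasFDerivAt_phi G hreg i).mul hexp
  have hfull := (hasFDerivAt_const lam (fun _ : Fin K => (1 : ℝ))).sub hmul
  refine hfull.congr_fderiv ?_
  ext v
  simp only [ContinuousLinearMap.sub_apply, ContinuousLinearMap.add_apply,
    ContinuousLinearMap.smul_apply, ContinuousLinearMap.neg_apply,
    ContinuousLinearMap.zero_apply, ContinuousLinearMap.coe_sum', Finset.sum_apply,
    ContinuousLinearMap.proj_apply, ContinuousLinearMap.comp_apply,
    LinearMap.coe_toContinuousLinearMap', LinearMap.smul_apply, Matrix.toLin'_apply,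
    Pi.smul_apply, Pi.neg_apply, smul_eq_mul, hTval, phi_ones G hreg, mulVec_sq G i v, Finset.sum_const, nsmul_eq_mul, hreg i, mul_inv_cancel₀ hV]
  rw [Finset.sum_sub_distrib, ← Finset.mul_sum, ← Finset.mul_sum]
  field_simp
  ring
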